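/- Let y be a q-ary string and k ≥ q+1 a positive integer. Then the duplication-with-transposition distance from the root of y to y satisfies f(y) ≥ N(y,k)/(2(k-1)), where N(y,k) is the number of distinct length-k substrings of y. -/

import Mathlib

open scoped BigOperators

/-- One duplication-with-transposition step: `x = a·b·c·d → y = a·b·c·b·d`, `b` non-empty. -/
def DupStep {q : ℕ} (x y : List (Fin q)) : Prop :=
  ∃ a b c d : List (Fin q), b ≠ [] ∧ x = a ++ b ++ c ++ d ∧ y = a ++ b ++ c ++ b ++ d

/-- `DupPath m x y` : `y` is obtained from `x` by exactly `m` duplication steps. -/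
def DupPath {q : ℕ} : ℕ → List (Fin q) → List (Fin q) → Prop
  | 0, x, y => x = y
  | n + 1, x, y => ∃ z, DupStep x z ∧ DupPath n z y

/-- Hamming distance between two lists (of equal length in intended use). -/
def listHammingDist {q : ℕ} (b b' : List (Fin q)) : ℕ :=
  ((b.zip b').filter fun p => decide (p.1 ≠ p.2)).length

/-- One β-approximate duplication-with-transposition step. -/
def ApproxStep {q : ℕ} (β : ℝ) (x y : List (Fin q)) : Prop :=
  ∃ a b c bh d : List (Fin q), b ≠ [] ∧ bh.length = b.length ∧
    (listHammingDist b bh : ℝ) ≤ β * b.length ∧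
    x = a ++ b ++ c ++ d ∧ y = a ++ b ++ c ++ bh ++ d

/-- `ApproxPath β m x y` : `y` obtained from `x` by exactly `m` β-approximate duplications. -/
def ApproxPath {q : ℕ} (β : ℝ) : ℕ → List (Fin q) → List (Fin q) → Prop
  | 0, x, y => x = y
  | n + 1, x, y => ∃ z, ApproxStep β x z ∧ ApproxPath β n z y

/-- The root of a string: the subsequence of first occurrences of symbols. -/
def firstOccs {q : ℕ} (l : List (Fin q)) : List (Fin q) :=
  l.foldl (fun acc a => if a ∈ acc then acc else acc ++ [a]) []


variable {q : ℕ}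

/-- windows of length `k` -/
def win (k : ℕ) (y : List (Fin q)) : Finset (List (Fin q)) :=
  ((Finset.range (y.length + 1)).image fun i => (y.drop i).take k).filter
    fun s => s.length = k

lemma mem_win {k : ℕ} (hk : 1 ≤ k) {y s : List (Fin q)} :
    s ∈ win k y ↔ s.length = k ∧ ∃ i, i + k ≤ y.length ∧ s = (y.drop i).take k := by
  simp only [win, Finset.mem_filter, Finset.mem_image, Finset.mem_range]
  constructor
  · rintro ⟨⟨i, hi, rfl⟩, hlen⟩
    refine ⟨hlen, i, ?_, rfl⟩
    simp only [List.length_take, List.length_drop] at hlen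
    omega
  · rintro ⟨hlen, i, hi, rfl⟩
    exact ⟨⟨i, by omega, rfl⟩, hlen⟩

lemma gwin1 (u w w' : List (Fin q)) (i k : ℕ) (h : i + k ≤ u.length) :
    ((u ++ w).drop i).take k = ((u ++ w').drop i).take k := by
  have h1 : k - (u.length - i) = 0 := by omega
  simp [List.drop_append, List.take_append, h1]

lemma gwin2 (u w : List (Fin q)) (j k : ℕ) :
    ((u ++ w).drop (u.length + j)).take k = (w.drop j).take k := by
  simp [List.drop_append, List.drop_of_length_le]

lemma card_win_step {k : ℕ} (hk : 1 ≤ k) {x y : List (Fin q)} (h : DupStep x y) :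
    (win k y).card ≤ (win k x).card + 2 * (k - 1) := by
  obtain ⟨a, b, c, d, -, rfl, rfl⟩ := h
  set B1 := (Finset.Ico (a.length + b.length + c.length + 1 - k)
      (a.length + b.length + c.length)).image
      (fun i => (((a ++ b ++ c ++ b ++ d)).drop i).take k) with hB1
  set B2 := (Finset.Ico (a.length + b.length + c.length + b.length + 1 - k)
      (a.length + b.length + c.length + b.length)).image
      (fun i => (((a ++ b ++ c ++ b ++ d)).drop i).take k) with hB2
  have hsub : win k (a ++ b ++ c ++ b ++ d) ⊆ (win k (a ++ b ++ c ++ d) ∪ B1) ∪ B2 := by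
    intro s hs
    rw [mem_win hk] at hs
    obtain ⟨hlen, i, hik, rfl⟩ := hs
    simp only [List.length_append] at hik
    have e1 : a ++ b ++ c ++ b ++ d = (a ++ b ++ c) ++ (b ++ d) := by
      simp [List.append_assoc]
    have e2 : a ++ b ++ c ++ d = (a ++ b ++ c) ++ d := by simp [List.append_assoc]
    have e3 : a ++ b ++ c ++ d = a ++ (b ++ (c ++ d)) := by simp [List.append_assoc]
    have e4 : a ++ b ++ c ++ b ++ d = (a ++ b ++ c ++ b) ++ d := by
      simp [List.append_assoc]
    by_cases hA : i + k ≤ a.length + b.length + c.length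
    · refine Finset.mem_union_left _ (Finset.mem_union_left _ ?_)
      rw [mem_win hk]
      refine ⟨hlen, i, by simp only [List.length_append]; omega, ?_⟩
      rw [e1, e2]
      exact gwin1 _ _ _ i k (by simp only [List.length_append]; omega)
    · by_cases hD : i < a.length + b.length + c.length
      · refine Finset.mem_union_left _ (Finset.mem_union_right _ ?_)
        rw [hB1, Finset.mem_image]
        exact ⟨i, Finset.mem_Ico.2 ⟨by omega, by omega⟩, rfl⟩
      · by_cases hB : i + k ≤ a.length + b.length + c.length + b.length
        · refine Finset.mem_union_left _ (Finset.mem_union_left _ ?_)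
          rw [mem_win hk]
          obtain ⟨j, rfl⟩ : ∃ j, i = a.length + b.length + c.length + j :=
            ⟨i - (a.length + b.length + c.length), by omega⟩
          refine ⟨hlen, a.length + j, by simp only [List.length_append]; omega, ?_⟩
          rw [e1, e3]
          have l1 : a.length + b.length + c.length + j = (a ++ b ++ c).length + j := by
            simp only [List.length_append]; try omega
          rw [l1, gwin2, gwin2]
          exact gwin1 _ _ _ _ _ (by omega)
        · by_cases hE : i < a.length + b.length + c.length + b.length
          · refine Finset.mem_union_right _ ?_
            rw [hB2, Finset.mem_image]
            exact ⟨i, Finset.mem_Ico.2 ⟨by omega, by omega⟩, rfl⟩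
          · refine Finset.mem_union_left _ (Finset.mem_union_left _ ?_)
            rw [mem_win hk]
            obtain ⟨j, rfl⟩ : ∃ j, i = a.length + b.length + c.length + b.length + j :=
              ⟨i - (a.length + b.length + c.length + b.length), by omega⟩
            refine ⟨hlen, a.length + b.length + c.length + j,
              by simp only [List.length_append]; omega, ?_⟩
            rw [e4, e2]
            have l1 : a.length + b.length + c.length + b.length + j =
                (a ++ b ++ c ++ b).length + j := by
              simp only [List.length_append]; try omega
            have l2 : a.length + b.length + c.length + j = (a ++ b ++ c).length + j := by
              simp only [List.length_append]; try omega
            rw [l1, l2, gwin2, gwin2]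
  have h1 : B1.card ≤ k - 1 := le_trans Finset.card_image_le (by rw [Nat.card_Ico]; omega)
  have h2 : B2.card ≤ k - 1 := le_trans Finset.card_image_le (by rw [Nat.card_Ico]; omega)
  have h3 := Finset.card_le_card hsub
  have h4 := Finset.card_union_le (win k (a ++ b ++ c ++ d) ∪ B1) B2
  have h5 := Finset.card_union_le (win k (a ++ b ++ c ++ d)) B1
  omega

lemma card_win_path {k : ℕ} (hk : 1 ≤ k) :
    ∀ m (x y : List (Fin q)), DupPath m x y →
      (win k y).card ≤ (win k x).card + 2 * (k - 1) * m := by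
  intro m
  induction m with
  | zero => intro x y h; cases h; simp
  | succ n ih =>
    intro x y h
    obtain ⟨z, hs, hp⟩ := h
    have h1 := card_win_step hk hs
    have h2 := ih z y hp
    have h3 : 2 * (k - 1) * (n + 1) = 2 * (k - 1) * n + 2 * (k - 1) := by ring
    omega

def fstep (acc : List (Fin q)) (a : Fin q) : List (Fin q) :=
  if a ∈ acc then acc else acc ++ [a]

lemma firstOccs_eq (l : List (Fin q)) : firstOccs l = l.foldl fstep [] := rfl

lemma mem_foldl_fstep (l : List (Fin q)) : ∀ (acc : List (Fin q)) (x : Fin q),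
    x ∈ l.foldl fstep acc ↔ x ∈ acc ∨ x ∈ l := by
  induction l with
  | nil => simp
  | cons a t ih =>
    intro acc x
    simp only [List.foldl_cons]
    rw [ih]
    by_cases h : a ∈ acc <;> simp [fstep, h] <;> by_cases hx : x = a <;> simp [hx] <;> tauto

lemma nodup_foldl_fstep (l : List (Fin q)) : ∀ acc : List (Fin q),
    acc.Nodup → (l.foldl fstep acc).Nodup := by
  induction l with
  | nil => simpa
  | cons a t ih =>
    intro acc hacc
    simp only [List.foldl_cons]
    by_cases h : a ∈ acc
    · simpa [fstep, h] using ih acc hacc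
    · refine ih _ ?_
      simp [fstep, h, List.nodup_append, hacc]
      exact fun b hb hba => h (hba ▸ hb)

lemma foldl_fstep_of_nodup (l : List (Fin q)) : ∀ acc : List (Fin q),
    l.Nodup → (∀ a ∈ l, a ∉ acc) → l.foldl fstep acc = acc ++ l := by
  induction l with
  | nil => simp
  | cons a t ih =>
    intro acc hnd hd
    have ha : a ∉ acc := hd a (by simp)
    simp only [List.foldl_cons, fstep, if_neg ha]
    rw [ih (acc ++ [a]) hnd.of_cons]
    · simp
    · intro x hx
      simp only [List.mem_append, List.mem_singleton]
      rintro (h | rfl)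
      · exact hd x (by simp [hx]) h
      · exact (List.nodup_cons.1 hnd).1 hx

lemma firstOccs_of_nodup {l : List (Fin q)} (h : l.Nodup) : firstOccs l = l := by
  rw [firstOccs_eq, foldl_fstep_of_nodup l [] h (by simp)]; simp

lemma firstOccs_nodup (l : List (Fin q)) : (firstOccs l).Nodup := by
  rw [firstOccs_eq]; exact nodup_foldl_fstep l [] (by simp)

lemma firstOccs_length_le (l : List (Fin q)) : (firstOccs l).length ≤ q := by
  simpa using (firstOccs_nodup l).length_le_card

lemma firstOccs_skip (u v : List (Fin q)) (x : Fin q) (hx : x ∈ u) :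
    firstOccs (u ++ x :: v) = firstOccs (u ++ v) := by
  rw [firstOccs_eq, firstOccs_eq, List.foldl_append, List.foldl_append, List.foldl_cons]
  congr 1
  have hmem : x ∈ u.foldl fstep [] := (mem_foldl_fstep u [] x).2 (Or.inr hx)
  simp [fstep, hmem]

lemma exists_rep {y : List (Fin q)} (h : ¬ y.Nodup) :
    ∃ u x v, y = u ++ x :: v ∧ x ∈ u := by
  induction y with
  | nil => simp at h
  | cons a t ih =>
    by_cases ha : a ∈ t
    · obtain ⟨s, t', rfl⟩ := List.append_of_mem ha
      exact ⟨a :: s, a, t', rfl, by simp⟩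
    · have ht : ¬ t.Nodup := fun hnd => h (List.nodup_cons.2 ⟨ha, hnd⟩)
      obtain ⟨u, x, v, rfl, hx⟩ := ih ht
      exact ⟨a :: u, x, v, rfl, by simp [hx]⟩

lemma dupPath_snoc : ∀ (n : ℕ) (x z y : List (Fin q)),
    DupPath n x z → DupStep z y → DupPath (n + 1) x y := by
  intro n
  induction n with
  | zero => intro x z y h hs; exact ⟨y, h ▸ hs, rfl⟩
  | succ n ih =>
    intro x z y h hs
    obtain ⟨w, h1, h2⟩ := h
    exact ⟨w, h1, ih w z y h2 hs⟩

lemma reach : ∀ (n : ℕ) (y : List (Fin q)), y.length ≤ n →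
    ∃ m, DupPath m (firstOccs y) y := by
  intro n
  induction n with
  | zero =>
    intro y hy
    have : y = [] := List.length_eq_zero_iff.1 (Nat.le_zero.1 hy)
    subst this
    exact ⟨0, rfl⟩
  | succ n ih =>
    intro y hy
    by_cases hn : y.Nodup
    · exact ⟨0, firstOccs_of_nodup hn⟩
    · obtain ⟨u, x, v, rfl, hx⟩ := exists_rep hn
      obtain ⟨m, hm⟩ := ih (u ++ v) (by simp only [List.length_append, List.length_cons] at hy ⊢; omega)
      obtain ⟨a, c, rfl⟩ := List.append_of_mem hx
      have hstep : DupStep ((a ++ x :: c) ++ v) ((a ++ x :: c) ++ x :: v) := by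
        refine ⟨a, [x], c, v, by simp, by simp, by simp⟩
      refine ⟨m + 1, ?_⟩
      rw [firstOccs_skip _ v x hx]
      exact dupPath_snoc m _ _ _ hm hstep

lemma infix_set_eq (k : ℕ) (hk : 1 ≤ k) (y : List (Fin q)) :
    {s : List (Fin q) | s.length = k ∧ s <:+: y} = ↑(win k y) := by
  ext s
  rw [Set.mem_setOf_eq, Finset.mem_coe, mem_win hk]
  constructor
  · rintro ⟨hlen, l1, l2, rfl⟩
    refine ⟨hlen, l1.length, by simp only [List.length_append]; omega, ?_⟩
    have : ((l1 ++ s ++ l2).drop l1.length).take s.length = s := by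
      simp [List.drop_append, List.take_append]
    rw [← hlen, this]
  · rintro ⟨hlen, i, hi, rfl⟩
    exact ⟨hlen, ((List.take_prefix _ _).isInfix).trans ((List.drop_suffix _ _).isInfix)⟩

lemma card_win_firstOccs {k : ℕ} (hkq : q < k) (y : List (Fin q)) :
    (win k (firstOccs y)).card = 0 := by
  rw [Finset.card_eq_zero, Finset.eq_empty_iff_forall_notMem]
  intro s hs
  rw [mem_win (by omega)] at hs
  obtain ⟨-, i, hi, -⟩ := hs
  have := firstOccs_length_le y
  omega


/-- the duplication-with-transposition distance from the root to `y`
is at least `N(y,k)/(2(k-1))` for `k ≥ q+1`. -/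
theorem stmt5 (q k : ℕ) (hq : 1 ≤ q) (hk : q + 1 ≤ k) (y : List (Fin q)) (hy : y ≠ []) :
    ((Nat.card {s : List (Fin q) // s.length = k ∧ s <:+: y} : ℕ) : ℝ) / (2 * ((k : ℝ) - 1))
      ≤ ((sInf {m : ℕ | DupPath m (firstOccs y) y} : ℕ) : ℝ) := by
  have hk1 : 1 ≤ k := by omega
  have hS : {m : ℕ | DupPath m (firstOccs y) y}.Nonempty := reach y.length y le_rfl
  have hmem : sInf {m : ℕ | DupPath m (firstOccs y) y} ∈
      {m : ℕ | DupPath m (firstOccs y) y} := Nat.sInf_mem hS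
  set m := sInf {m : ℕ | DupPath m (firstOccs y) y} with hm
  have hbound : (win k y).card ≤ 2 * (k - 1) * m := by
    have h1 := card_win_path hk1 m (firstOccs y) y hmem
    have h0 := card_win_firstOccs (q := q) (k := k) (by omega) y
    omega
  have hcard : Nat.card {s : List (Fin q) // s.length = k ∧ s <:+: y} = (win k y).card := by
    calc Nat.card {s : List (Fin q) // s.length = k ∧ s <:+: y}
        = ({s : List (Fin q) | s.length = k ∧ s <:+: y}).ncard := Nat.card_coe_set_eq _
      _ = ((win k y : Set (List (Fin q)))).ncard := by rw [infix_set_eq k hk1 y]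
      _ = (win k y).card := Set.ncard_coe_finset _
  rw [hcard]
  have hpos : (0 : ℝ) < 2 * ((k : ℝ) - 1) := by
    have : (2 : ℝ) ≤ (k : ℝ) := by exact_mod_cast (by omega : 2 ≤ k)
    linarith
  rw [div_le_iff₀ hpos]
  calc ((win k y).card : ℝ) ≤ ((2 * (k - 1) * m : ℕ) : ℝ) := by exact_mod_cast hbound
    _ = (m : ℝ) * (2 * ((k : ℝ) - 1)) := by
        push_cast [Nat.cast_sub hk1]
        ring
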